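/- Let λ ∈ ℝ, let f be continuous on (l,r), and let u be twice continuously differentiable on (l,r) with a u'' + b u' - λ u = -f on (l,r). Assume that m·u and m·f are Lebesgue integrable on (l,x] for every x ∈ (l,r) and that lim_{y→l+} u'(y)/s'(y) = 0 (Neumann condition at l). Then v(x) := ∫_{(l,x]} m(z) u(z) dz is twice differentiable and satisfies a v'' + (a'-b) v' - λ v = -g on (l,r), where g(x) := ∫_{(l,x]} m(z) f(z) dz. (This conjugation of Poisson's equation is the key analytic step in the paper's proof of the Siegmund duality P_t 1_{[l,y]}(x) = P̂_t 1_{[x,r]}(y) between a diffusion and its conjugate.) -/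

import Mathlib

open MeasureTheory Filter

private lemma measS (l : EReal) (t : ℝ) :
    MeasurableSet {z : ℝ | l < (z : EReal) ∧ z ≤ t} := by
  have h : {z : ℝ | l < (z : EReal) ∧ z ≤ t}
      = (Real.toEReal ⁻¹' Set.Ioi l) ∩ Set.Iic t := rfl
  rw [h]
  exact ((isOpen_Ioi.preimage continuous_coe_real_ereal).measurableSet).inter measurableSet_Iic

private lemma aux_shrink (l : EReal) (F : ℝ → ℝ) (x : ℝ)
    (hF : IntegrableOn F {z : ℝ | l < (z : EReal) ∧ z ≤ x})
    (y : ℕ → ℝ) (hyx : ∀ n, y n ≤ x)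
    (hyl : Tendsto (fun n => ((y n : ℝ) : EReal)) atTop (nhds l)) :
    Tendsto (fun n => ∫ z in {z : ℝ | l < (z : EReal) ∧ z ≤ y n}, F z) atTop (nhds 0) := by
  set S : ℝ → Set ℝ := fun t => {z : ℝ | l < (z : EReal) ∧ z ≤ t} with hS
  set F' : ℝ → ℝ := (S x).indicator F with hF'
  have hF'int : Integrable F' := (integrable_indicator_iff (measS l x)).2 hF
  have key : Tendsto (fun n => ∫ z, (S (y n)).indicator F' z) atTop
      (nhds (∫ _ : ℝ, (0:ℝ))) := by
    apply tendsto_integral_of_dominated_convergence (fun z => ‖F' z‖)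
    · intro n; exact hF'int.aestronglyMeasurable.indicator (measS l _)
    · exact hF'int.norm
    · intro n; filter_upwards with z; exact norm_indicator_le_norm_self _ _
    · filter_upwards with z
      by_cases hz : l < (z : EReal)
      · have hev : ∀ᶠ n in atTop, (y n : EReal) < (z : EReal) :=
          hyl (Iio_mem_nhds hz)
        apply tendsto_const_nhds.congr'
        filter_upwards [hev] with n hn
        have hzy : ¬ z ≤ y n := by
          intro hle
          exact absurd (EReal.coe_le_coe_iff.2 hle) (not_le.2 hn)
        simp [Set.indicator_of_notMem, hS, Set.mem_setOf_eq, hzy]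
      · apply tendsto_const_nhds.congr'
        filter_upwards with n
        have : z ∉ S (y n) := fun h => hz h.1
        simp [Set.indicator_of_notMem this]
  have heq : ∀ n, ∫ z, (S (y n)).indicator F' z = ∫ z in S (y n), F z := by
    intro n
    rw [integral_indicator (measS l _)]
    apply setIntegral_congr_fun (measS l _)
    intro z hz
    have hzx : z ∈ S x := ⟨hz.1, hz.2.trans (hyx n)⟩
    simp [hF', Set.indicator_of_mem hzx]
  simpa [heq, integral_zero] using key

/-- Conjugation of Poisson's equation: if `a u'' + b u' - λ u = -f` on `(l,r)` with the
Neumann condition `u'/s' → 0` at `l⁺`, then `v(x) = ∫_{(l,x]} m u` is twice differentiable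
and satisfies `a v'' + (a'-b) v' - λ v = -g` on `(l,r)`, where `g(x) = ∫_{(l,x]} m f`. -/
theorem poisson_equation_conjugation
    (l r : EReal) (hlr : l < r)
    (I : Set ℝ) (hI : I = {x : ℝ | l < (x : EReal) ∧ (x : EReal) < r})
    (a a' b : ℝ → ℝ) (c : ℝ) (hc : c ∈ I)
    (ha : ∀ x ∈ I, HasDerivAt a (a' x) x)
    (ha' : ContinuousOn a' I)
    (hb : ContinuousOn b I)
    (hapos : ∀ x ∈ I, 0 < a x)
    (s' m : ℝ → ℝ)
    (hs' : ∀ x : ℝ, s' x = Real.exp (-(∫ y in c..x, b y / a y)))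
    (hm : ∀ x : ℝ, m x = 1 / (s' x * a x))
    (lam : ℝ) (f u : ℝ → ℝ)
    (hf : ContinuousOn f I)
    (hu1 : ∀ x ∈ I, DifferentiableAt ℝ u x)
    (hu2 : ∀ x ∈ I, DifferentiableAt ℝ (deriv u) x)
    (hu2c : ContinuousOn (deriv (deriv u)) I)
    (hode : ∀ x ∈ I,
      a x * deriv (deriv u) x + b x * deriv u x - lam * u x = -(f x))
    (hintu : ∀ x ∈ I,
      IntegrableOn (fun z => m z * u z) {z : ℝ | l < (z : EReal) ∧ z ≤ x})
    (hintf : ∀ x ∈ I,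
      IntegrableOn (fun z => m z * f z) {z : ℝ | l < (z : EReal) ∧ z ≤ x})
    (hNeumann : Filter.Tendsto (fun y : ℝ => deriv u y / s' y)
      (Filter.comap (fun y : ℝ => (y : EReal)) (nhdsWithin l (Set.Ioi l)))
      (nhds 0))
    (v g : ℝ → ℝ)
    (hv : ∀ x : ℝ, v x = ∫ z in {z : ℝ | l < (z : EReal) ∧ z ≤ x}, m z * u z)
    (hg : ∀ x : ℝ, g x = ∫ z in {z : ℝ | l < (z : EReal) ∧ z ≤ x}, m z * f z) :
    ∀ x ∈ I,
      DifferentiableAt ℝ v x ∧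
      DifferentiableAt ℝ (deriv v) x ∧
      a x * deriv (deriv v) x + (a' x - b x) * deriv v x - lam * v x = -(g x) := by
  -- basic facts about I
  have hmemI : ∀ t : ℝ, t ∈ I ↔ l < (t : EReal) ∧ (t : EReal) < r := by
    intro t; rw [hI]; exact Iff.rfl
  have hIopen : IsOpen I := by
    have h : I = Real.toEReal ⁻¹' Set.Ioo l r := by rw [hI]; rfl
    rw [h]; exact isOpen_Ioo.preimage continuous_coe_real_ereal
  have hIcc : ∀ p ∈ I, ∀ q ∈ I, Set.uIcc p q ⊆ I := by
    intro p hp q hq z hz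
    rcases Set.mem_uIcc.1 hz with ⟨h1, h2⟩ | ⟨h1, h2⟩
    · exact (hmemI z).2 ⟨lt_of_lt_of_le ((hmemI p).1 hp).1 (EReal.coe_le_coe_iff.2 h1),
        lt_of_le_of_lt (EReal.coe_le_coe_iff.2 h2) ((hmemI q).1 hq).2⟩
    · exact (hmemI z).2 ⟨lt_of_lt_of_le ((hmemI q).1 hq).1 (EReal.coe_le_coe_iff.2 h1),
        lt_of_le_of_lt (EReal.coe_le_coe_iff.2 h2) ((hmemI p).1 hp).2⟩
  have haC : ContinuousOn a I := fun t ht => ((ha t ht).continuousAt).continuousWithinAt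
  have hane : ∀ t ∈ I, a t ≠ 0 := fun t ht => (hapos t ht).ne'
  have hbaC : ContinuousOn (fun y => b y / a y) I := hb.div haC hane
  set E : ℝ → ℝ := fun t => ∫ y in c..t, b y / a y with hE
  have hEder : ∀ t ∈ I, HasDerivAt E (b t / a t) t := by
    intro t ht
    exact intervalIntegral.integral_hasDerivAt_right
      ((hbaC.mono (hIcc c hc t ht)).intervalIntegrable)
      (hbaC.stronglyMeasurableAtFilter hIopen t ht)
      (hbaC.continuousAt (hIopen.mem_nhds ht))
  have hmeq : ∀ t, m t = Real.exp (E t) / a t := by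
    intro t
    rw [hm, hs', Real.exp_neg, one_div, mul_inv, inv_inv, div_eq_mul_inv]
  have hmfun : m = fun t => Real.exp (E t) / a t := funext hmeq
  set md : ℝ → ℝ := fun t =>
    (Real.exp (E t) * (b t / a t) * a t - Real.exp (E t) * a' t) / (a t) ^ 2 with hmd
  have hmder : ∀ t ∈ I, HasDerivAt m (md t) t := by
    intro t ht
    have hexp : HasDerivAt (fun y => Real.exp (E y)) (Real.exp (E t) * (b t / a t)) t :=
      (hEder t ht).exp
    have := hexp.div (ha t ht) (hane t ht)
    rw [hmfun]
    exact this
  have hmC : ContinuousOn m I := fun t ht => ((hmder t ht).continuousAt).continuousWithinAt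
  have huC : ContinuousOn u I := fun t ht => ((hu1 t ht).continuousAt).continuousWithinAt
  have hu'C : ContinuousOn (deriv u) I := fun t ht => ((hu2 t ht).continuousAt).continuousWithinAt
  have hmuC : ContinuousOn (fun z => m z * u z) I := hmC.mul huC
  -- generic set-splitting
  have hsplit : ∀ p ∈ I, ∀ q, p ≤ q →
      {z : ℝ | l < (z : EReal) ∧ z ≤ q}
        = {z : ℝ | l < (z : EReal) ∧ z ≤ p} ∪ Set.Ioc p q := by
    intro p hp q hpq
    ext z
    simp only [Set.mem_setOf_eq, Set.mem_union, Set.mem_Ioc]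
    constructor
    · rintro ⟨h1, h2⟩
      rcases le_or_gt z p with h | h
      · exact Or.inl ⟨h1, h⟩
      · exact Or.inr ⟨h, h2⟩
    · rintro (⟨h1, h2⟩ | ⟨h1, h2⟩)
      · exact ⟨h1, h2.trans hpq⟩
      · exact ⟨lt_trans ((hmemI p).1 hp).1 (EReal.coe_lt_coe_iff.2 h1), h2⟩
  -- v difference representation
  have hrep : ∀ G : ℝ → ℝ, ContinuousOn G I →
      (∀ t ∈ I, IntegrableOn G {z : ℝ | l < (z : EReal) ∧ z ≤ t}) →
      ∀ p ∈ I, ∀ q ∈ I, p ≤ q →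
      (∫ z in {z : ℝ | l < (z : EReal) ∧ z ≤ q}, G z)
        = (∫ z in {z : ℝ | l < (z : EReal) ∧ z ≤ p}, G z) + ∫ z in p..q, G z := by
    intro G hGC hGint p hp q hq hpq
    have hIccI : Set.Icc p q ⊆ I := by
      rw [← Set.uIcc_of_le hpq]; exact hIcc p hp q hq
    have hGIoc : IntegrableOn G (Set.Ioc p q) :=
      ((hGC.mono hIccI).integrableOn_Icc).mono_set Set.Ioc_subset_Icc_self
    rw [hsplit p hp q hpq, setIntegral_union ?_ measurableSet_Ioc (hGint p hp) hGIoc,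
      intervalIntegral.integral_of_le hpq]
    · rintro s hs1 hs2 z hz
      have h1 := hs1 hz
      have h2 := hs2 hz
      exact absurd h2.1 (not_lt.2 h1.2)
  -- derivative of v
  have hvder : ∀ t ∈ I, HasDerivAt v (m t * u t) t := by
    intro t ht
    have hF : HasDerivAt (fun y => v c + ∫ z in c..y, m z * u z) (m t * u t) t := by
      apply HasDerivAt.const_add
      exact intervalIntegral.integral_hasDerivAt_right
        ((hmuC.mono (hIcc c hc t ht)).intervalIntegrable)
        (hmuC.stronglyMeasurableAtFilter hIopen t ht)
        (hmuC.continuousAt (hIopen.mem_nhds ht))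
    apply hF.congr_of_eventuallyEq
    filter_upwards [hIopen.mem_nhds ht] with y hy
    rcases le_total c y with h | h
    · rw [hv y, hv c, hrep _ hmuC hintu c hc y hy h]
    · rw [hv y, hv c, hrep _ hmuC hintu y hy c hc h, intervalIntegral.integral_symm]
      ring
  intro x hx
  have hdv : ∀ t ∈ I, deriv v t = m t * u t := fun t ht => (hvder t ht).deriv
  have hv2 : HasDerivAt (deriv v) (md x * u x + m x * deriv u x) x := by
    have h1 : HasDerivAt (fun y => m y * u y) (md x * u x + m x * deriv u x) x :=
      (hmder x hx).mul ((hu1 x hx).hasDerivAt)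
    apply h1.congr_of_eventuallyEq
    filter_upwards [hIopen.mem_nhds hx] with y hy
    exact hdv y hy
  refine ⟨(hvder x hx).differentiableAt, hv2.differentiableAt, ?_⟩
  -- the key identity via Neumann condition
  set F : ℝ → ℝ := fun z => lam * (m z * u z) - m z * f z with hF
  have hFC : ContinuousOn F I := ((hmuC.const_smul lam).sub (hmC.mul hf))
  have hFint : ∀ t ∈ I, IntegrableOn F {z : ℝ | l < (z : EReal) ∧ z ≤ t} :=
    fun t ht => ((hintu t ht).const_mul lam).sub (hintf t ht)
  set h : ℝ → ℝ := fun z => deriv u z * Real.exp (E z) with hh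
  have hhs' : ∀ z, h z = deriv u z / s' z := by
    intro z
    rw [hh, hs', Real.exp_neg, div_eq_mul_inv, inv_inv]
  have hhder : ∀ z ∈ I, HasDerivAt h (F z) z := by
    intro z hz
    have h1 : HasDerivAt h
        (deriv (deriv u) z * Real.exp (E z) + deriv u z * (Real.exp (E z) * (b z / a z))) z :=
      ((hu2 z hz).hasDerivAt).mul (hEder z hz).exp
    convert h1 using 1
    have hode' : lam * u z - f z = a z * deriv (deriv u) z + b z * deriv u z := by
      have := hode z hz; linarith
    have haz := hane z hz
    have hFz : F z = (Real.exp (E z) / a z) * (a z * deriv (deriv u) z + b z * deriv u z) := by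
      show lam * (m z * u z) - m z * f z = _
      rw [hmeq, ← hode']; ring
    rw [hFz]
    field_simp
  have hFTC : ∀ y ∈ I, y ≤ x → (∫ z in y..x, F z) = h x - h y := by
    intro y hy hyx
    exact intervalIntegral.integral_eq_sub_of_hasDerivAt
      (fun z hz => hhder z (hIcc y hy x hx hz))
      ((hFC.mono (hIcc y hy x hx)).intervalIntegrable)
  have hconst : ∀ y ∈ I, y ≤ x →
      h x - ∫ z in {z : ℝ | l < (z : EReal) ∧ z ≤ x}, F z
        = h y - ∫ z in {z : ℝ | l < (z : EReal) ∧ z ≤ y}, F z := by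
    intro y hy hyx
    have h1 := hrep F hFC hFint y hy x hx hyx
    have h2 := hFTC y hy hyx
    rw [h1, h2]; ring
  -- sequence approaching l from the right
  obtain ⟨y, hyI, hyx, hytend⟩ : ∃ y : ℕ → ℝ, (∀ n, y n ∈ I) ∧ (∀ n, y n ≤ x) ∧
      Tendsto (fun n => ((y n : ℝ) : EReal)) atTop (nhdsWithin l (Set.Ioi l)) := by
    have hlx : l < (x : EReal) := ((hmemI x).1 hx).1
    have hxr : (x : EReal) < r := ((hmemI x).1 hx).2
    by_cases hbot : l = ⊥
    · subst hbot
      refine ⟨fun n => (x - 1) + (-(n : ℝ)), ?_, ?_, ?_⟩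
      · intro n
        refine (hmemI _).2 ⟨bot_lt_iff_ne_bot.2 (EReal.coe_ne_bot _), ?_⟩
        refine lt_trans (EReal.coe_lt_coe_iff.2 ?_) hxr
        have h0n : (0:ℝ) ≤ n := Nat.cast_nonneg n
        show (x - 1) + (-(n:ℝ)) < x
        linarith
      · intro n
        have h0n : (0:ℝ) ≤ n := Nat.cast_nonneg n
        show (x - 1) + (-(n:ℝ)) ≤ x
        linarith
      · have hb1 : Tendsto (fun n : ℕ => (x - 1) + (-(n : ℝ))) atTop atBot :=
          tendsto_atBot_add_const_left atTop (x - 1)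
            (tendsto_neg_atTop_atBot.comp tendsto_natCast_atTop_atTop)
        have hIoi : Set.Ioi (⊥ : EReal) = {(⊥ : EReal)}ᶜ := by
          ext t; simp [bot_lt_iff_ne_bot]
        rw [hIoi, EReal.nhdsWithin_bot]
        exact Filter.tendsto_map.comp hb1
    · have htop : l ≠ ⊤ := ne_top_of_lt hlx
      set ll : ℝ := l.toReal with hll
      have hcoel : (ll : EReal) = l := EReal.coe_toReal htop hbot
      have hllx : ll < x := EReal.coe_lt_coe_iff.1 (hcoel ▸ hlx)
      refine ⟨fun n => ll + (x - ll) / (n + 1), ?_, ?_, ?_⟩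
      · intro n
        have hpos : 0 < (x - ll) / (n + 1) :=
          div_pos (by linarith) (by positivity)
        have hle : (x - ll) / (n + 1) ≤ x - ll :=
          div_le_self (by linarith) (by simp [le_add_iff_nonneg_left])
        refine (hmemI _).2 ⟨?_, ?_⟩
        · rw [← hcoel]; exact EReal.coe_lt_coe_iff.2 (by linarith)
        · refine lt_of_le_of_lt (EReal.coe_le_coe_iff.2 (by linarith)) hxr
      · intro n
        have hle : (x - ll) / (n + 1) ≤ x - ll :=
          div_le_self (by linarith) (by simp [le_add_iff_nonneg_left])
        linarith
      · apply tendsto_nhdsWithin_of_tendsto_nhds_of_eventually_within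
        · rw [← hcoel]
          apply EReal.tendsto_coe.2
          have h0 : Tendsto (fun n : ℕ => (x - ll) * (1 / ((n : ℝ) + 1))) atTop (nhds 0) := by
            simpa using tendsto_one_div_add_atTop_nhds_zero_nat.const_mul (x - ll)
          have := h0.const_add ll
          simp only [add_zero] at this
          convert this using 2 with n
          ring
        · filter_upwards with n
          rw [← hcoel]
          refine EReal.coe_lt_coe_iff.2 ?_
          have hpos : 0 < (x - ll) / (n + 1) := div_pos (by linarith) (by positivity)
          linarith
  have hG0 : Tendsto (fun n => ∫ z in {z : ℝ | l < (z : EReal) ∧ z ≤ y n}, F z)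
      atTop (nhds 0) :=
    aux_shrink l F x (hFint x hx) y hyx (hytend.mono_right nhdsWithin_le_nhds)
  have hh0 : Tendsto (fun n => h (y n)) atTop (nhds 0) := by
    have hyL : Tendsto y atTop
        (Filter.comap (fun y : ℝ => (y : EReal)) (nhdsWithin l (Set.Ioi l))) :=
      tendsto_comap_iff.2 hytend
    have := hNeumann.comp hyL
    apply this.congr
    intro n
    exact (hhs' (y n)).symm
  have hkey : h x = ∫ z in {z : ℝ | l < (z : EReal) ∧ z ≤ x}, F z := by
    have hc1 : Tendsto (fun n => h (y n)
        - ∫ z in {z : ℝ | l < (z : EReal) ∧ z ≤ y n}, F z) atTop (nhds 0) := by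
      simpa using hh0.sub hG0
    have hc2 : (fun n => h (y n)
        - ∫ z in {z : ℝ | l < (z : EReal) ∧ z ≤ y n}, F z)
        = fun _ => h x - ∫ z in {z : ℝ | l < (z : EReal) ∧ z ≤ x}, F z := by
      funext n; exact (hconst (y n) (hyI n) (hyx n)).symm
    rw [hc2] at hc1
    have := tendsto_nhds_unique hc1 tendsto_const_nhds
    linarith
  have hFval : (∫ z in {z : ℝ | l < (z : EReal) ∧ z ≤ x}, F z) = lam * v x - g x := by
    rw [hF, hv, hg]
    rw [integral_sub (((hintu x hx).const_mul lam)) (hintf x hx), integral_const_mul]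
  -- final algebra
  have hiden : deriv u x * Real.exp (E x) = lam * v x - g x := by
    rw [← hFval]; exact hkey
  rw [hv2.deriv, hdv x hx, hmeq x]
  have haz := hane x hx
  simp only [hmd]
  field_simp
  linear_combination (a x) * hiden
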